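/- Let R > 0, let S ⊆ ℝ² be the circle of radius R centered at the origin, let Ω = ℝ² \ {0}, and let cp : Ω → ℝ² be cp(x) = (R/‖x‖)·x, the closest point function for S. Let n be a natural number, set λ = n²/R², and define w : Ω → ℝ by w(x₁, x₂) = Re((x₁ + i x₂)^n)/‖(x₁, x₂)‖^n (i.e. w = cos(nθ) = cos(√λ·R·θ) in polar coordinates); note w ∘ cp = w on Ω. Let ε > 0 with λε² ≠ 4 and define v : Ω → ℝ by v(x) = ( λ ε² (1 − R²/‖x‖²) / (−λ ε² + 4) + 1 ) · w(x). Then v(x) = w(x) for every x ∈ S, and v satisfies the regularized embedded eigenvalue problem −Δ♯_ε v(x) = λ v(x) for every x ∈ Ω, where Δ♯_ε v(x) := Δ(v ∘ cp)(x) − (4/ε²)·(v(x) − v(cp(x))). -/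

import Mathlib

/-- The standard Euclidean Laplacian on `ℝ^d`: the sum of the second partial
derivatives. -/
noncomputable def lap {d : ℕ} (f : EuclideanSpace ℝ (Fin d) → ℝ)
    (x : EuclideanSpace ℝ (Fin d)) : ℝ :=
  ∑ i : Fin d, fderiv ℝ (fun y => fderiv ℝ f y (EuclideanSpace.single i 1)) x
    (EuclideanSpace.single i 1)

/-- The function `w(x₁, x₂) = Re((x₁ + i x₂)^n) / ‖(x₁,x₂)‖^n`, i.e. `cos(nθ)` in
polar coordinates. -/
noncomputable def wfun (n : ℕ) (x : EuclideanSpace ℝ (Fin 2)) : ℝ :=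
  ((((x 0 : ℂ) + (x 1 : ℂ) * Complex.I)) ^ n).re / ‖x‖ ^ n

/-- The closest point function of the circle of radius `R` centred at the origin,
defined on `Ω = ℝ² \ {0}`. -/
noncomputable def cpCircle (R : ℝ) (x : EuclideanSpace ℝ (Fin 2)) :
    EuclideanSpace ℝ (Fin 2) :=
  (R / ‖x‖) • x

/- ### Auxiliary machinery -/

noncomputable abbrev E2 := EuclideanSpace ℝ (Fin 2)

noncomputable def Zc : E2 →L[ℝ] ℂ :=
  (Complex.ofRealCLM.comp (EuclideanSpace.proj (0 : Fin 2))) +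
  (Complex.I • (Complex.ofRealCLM.comp (EuclideanSpace.proj (1 : Fin 2))))

noncomputable def prj (i : Fin 2) : E2 →L[ℝ] ℝ := EuclideanSpace.proj i

lemma Zc_apply (x : E2) : Zc x = (x 0 : ℂ) + (x 1 : ℂ) * Complex.I := by simp [Zc]; ring
lemma prj_apply (i : Fin 2) (x : E2) : prj i x = x i := rfl
lemma Zc_e0 : Zc (EuclideanSpace.single (0:Fin 2) 1) = 1 := by
  simp [Zc, EuclideanSpace.single_apply]
lemma Zc_e1 : Zc (EuclideanSpace.single (1:Fin 2) 1) = Complex.I := by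
  simp [Zc, EuclideanSpace.single_apply]

noncomputable def qf (x : E2) : ℝ := x 0 ^ 2 + x 1 ^ 2

lemma qf_eq (x : E2) : qf x = ‖x‖ ^ 2 := by
  rw [qf, EuclideanSpace.norm_eq, Real.sq_sqrt (by positivity)]
  simp [Fin.sum_univ_two, sq_abs]

lemma qf_pos {x : E2} (hx : x ≠ 0) : 0 < qf x := by
  rw [qf_eq]; exact pow_pos (norm_pos_iff.2 hx) 2

noncomputable def pn (n : ℕ) : ℝ := -(n:ℝ)/2

lemma wfun_eq' (n : ℕ) (x : E2) (hx : x ≠ 0) :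
    wfun n x = (Zc x ^ n).re * qf x ^ pn n := by
  have hn : (0:ℝ) < ‖x‖ := norm_pos_iff.2 hx
  rw [wfun, Zc_apply, qf_eq, pn]
  rw [← Real.rpow_natCast ‖x‖ n, ← Real.rpow_two,
    ← Real.rpow_mul (le_of_lt hn), div_eq_mul_inv, ← Real.rpow_neg (le_of_lt hn)]
  ring_nf

noncomputable def DZ (k : ℕ) (y : E2) : E2 →L[ℝ] ℂ :=
  ((((1 : ℂ →L[ℂ] ℂ).smulRight ((k:ℂ) * Zc y ^ (k-1))).restrictScalars ℝ).comp Zc)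

lemma DZ_apply (k : ℕ) (y h : E2) : DZ k y h = (k:ℂ) * Zc y ^ (k-1) * Zc h := by
  simp [DZ]; ring

lemma hasFDerivAt_Zpow (k : ℕ) (y : E2) :
    HasFDerivAt (fun x : E2 => Zc x ^ k) (DZ k y) y := by
  have h1 : HasDerivAt (fun w : ℂ => w ^ k) ((k:ℂ) * Zc y ^ (k-1)) (Zc y) := by
    simpa using hasDerivAt_pow k (Zc y)
  exact (h1.hasFDerivAt.restrictScalars ℝ).comp y Zc.hasFDerivAt

lemma hasFDerivAt_reZ (k : ℕ) (y : E2) :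
    HasFDerivAt (fun x : E2 => (Zc x ^ k).re) (Complex.reCLM.comp (DZ k y)) y :=
  Complex.reCLM.hasFDerivAt.comp y (hasFDerivAt_Zpow k y)

lemma hasFDerivAt_imZ (k : ℕ) (y : E2) :
    HasFDerivAt (fun x : E2 => (Zc x ^ k).im) (Complex.imCLM.comp (DZ k y)) y :=
  Complex.imCLM.hasFDerivAt.comp y (hasFDerivAt_Zpow k y)

noncomputable def DQ (p : ℝ) (y : E2) : E2 →L[ℝ] ℝ :=
  (p * qf y ^ (p-1)) • ((2 * y 0) • prj 0 + (2 * y 1) • prj 1)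

lemma DQ_apply (p : ℝ) (y h : E2) :
    DQ p y h = p * qf y ^ (p-1) * (2 * y 0 * h 0 + 2 * y 1 * h 1) := by
  simp [DQ, prj_apply]; ring

lemma hasFDerivAt_qf (y : E2) :
    HasFDerivAt qf ((2 * y 0) • prj 0 + (2 * y 1) • prj 1) y := by
  have h0 : HasFDerivAt (fun x : E2 => x 0) (prj 0) y := (prj 0).hasFDerivAt
  have h1 : HasFDerivAt (fun x : E2 => x 1) (prj 1) y := (prj 1).hasFDerivAt
  have := ((h0.mul h0).add (h1.mul h1))
  refine (this.congr_fderiv ?_).congr_of_eventuallyEq (Filter.Eventually.of_forall fun x => ?_)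
  · ext h; simp [prj_apply]; ring
  · simp [qf]; ring

lemma hasFDerivAt_qfpow (p : ℝ) (y : E2) (hy : qf y ≠ 0) :
    HasFDerivAt (fun x : E2 => qf x ^ p) (DQ p y) y := by
  have hr : HasDerivAt (fun s : ℝ => s ^ p) (p * qf y ^ (p-1)) (qf y) :=
    Real.hasDerivAt_rpow_const (Or.inl hy)
  exact hr.comp_hasFDerivAt y (hasFDerivAt_qf y)

/- First-order derivative of `wfun`. -/

noncomputable def Dwf (n : ℕ) (y : E2) : E2 →L[ℝ] ℝ :=
  (Zc y ^ n).re • DQ (pn n) y + (qf y ^ pn n) • (Complex.reCLM.comp (DZ n y))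

lemma hasFDerivAt_wfun (n : ℕ) (y : E2) (hy : y ≠ 0) :
    HasFDerivAt (wfun n) (Dwf n y) y := by
  have hq := (qf_pos hy).ne'
  have h := (hasFDerivAt_reZ n y).mul (hasFDerivAt_qfpow (pn n) y hq)
  refine h.congr_of_eventuallyEq ?_
  have hev : ∀ᶠ z in nhds y, z ≠ 0 := eventually_ne_nhds hy
  exact hev.mono fun z hz => wfun_eq' n z hz

noncomputable def G0 (n : ℕ) (y : E2) : ℝ :=
  (n:ℝ) * (Zc y ^ (n-1)).re * qf y ^ pn n +
  (Zc y ^ n).re * (pn n * qf y ^ (pn n - 1) * (2 * y 0))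

noncomputable def G1 (n : ℕ) (y : E2) : ℝ :=
  (n:ℝ) * (-(Zc y ^ (n-1)).im) * qf y ^ pn n +
  (Zc y ^ n).re * (pn n * qf y ^ (pn n - 1) * (2 * y 1))

lemma fderiv_wfun_e0 (n : ℕ) (y : E2) (hy : y ≠ 0) :
    fderiv ℝ (wfun n) y (EuclideanSpace.single (0:Fin 2) 1) = G0 n y := by
  rw [(hasFDerivAt_wfun n y hy).fderiv]
  simp [Dwf, DQ_apply, DZ_apply, G0, Zc_e0, EuclideanSpace.single_apply,
    Complex.mul_re, Complex.natCast_re, Complex.natCast_im]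
  ring

lemma fderiv_wfun_e1 (n : ℕ) (y : E2) (hy : y ≠ 0) :
    fderiv ℝ (wfun n) y (EuclideanSpace.single (1:Fin 2) 1) = G1 n y := by
  rw [(hasFDerivAt_wfun n y hy).fderiv]
  simp [Dwf, DQ_apply, DZ_apply, G1, Zc_e1, EuclideanSpace.single_apply,
    Complex.mul_re, Complex.mul_im, Complex.natCast_re, Complex.natCast_im,
    Complex.I_re, Complex.I_im]
  ring

/- Second-order: explicit derivatives of `G0`, `G1`. -/

lemma hasFDerivAt_G0 (n : ℕ) (x : E2) (hq : qf x ≠ 0) :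
    HasFDerivAt (G0 n)
      ((((n:ℝ) * (Zc x ^ (n-1)).re) • DQ (pn n) x +
        (qf x ^ pn n) • ((n:ℝ) • (Complex.reCLM.comp (DZ (n-1) x)))) +
       ((Zc x ^ n).re • ((pn n * qf x ^ (pn n - 1)) • ((2:ℝ) • prj 0) +
          (2 * x 0) • ((pn n) • DQ (pn n - 1) x)) +
        (pn n * qf x ^ (pn n - 1) * (2 * x 0)) • (Complex.reCLM.comp (DZ n x)))) x := by
  have h0 : HasFDerivAt (fun y : E2 => y 0) (prj 0) x := (prj 0).hasFDerivAt
  exact (((hasFDerivAt_reZ (n-1) x).const_mul (n:ℝ)).mul (hasFDerivAt_qfpow (pn n) x hq)).add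
    ((hasFDerivAt_reZ n x).mul
      ((((hasFDerivAt_qfpow (pn n - 1) x hq).const_mul (pn n)).mul (h0.const_mul 2))))

lemma hasFDerivAt_G1 (n : ℕ) (x : E2) (hq : qf x ≠ 0) :
    HasFDerivAt (G1 n)
      ((((n:ℝ) * (-(Zc x ^ (n-1)).im)) • DQ (pn n) x +
        (qf x ^ pn n) • ((n:ℝ) • (-(Complex.imCLM.comp (DZ (n-1) x))))) +
       ((Zc x ^ n).re • ((pn n * qf x ^ (pn n - 1)) • ((2:ℝ) • prj 1) +
          (2 * x 1) • ((pn n) • DQ (pn n - 1) x)) +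
        (pn n * qf x ^ (pn n - 1) * (2 * x 1)) • (Complex.reCLM.comp (DZ n x)))) x := by
  have h1 : HasFDerivAt (fun y : E2 => y 1) (prj 1) x := (prj 1).hasFDerivAt
  exact ((((hasFDerivAt_imZ (n-1) x).neg).const_mul (n:ℝ)).mul (hasFDerivAt_qfpow (pn n) x hq)).add
    ((hasFDerivAt_reZ n x).mul
      ((((hasFDerivAt_qfpow (pn n - 1) x hq).const_mul (pn n)).mul (h1.const_mul 2))))

lemma Zc_re (x : E2) : (Zc x).re = x 0 := by rw [Zc_apply]; simp
lemma Zc_im (x : E2) : (Zc x).im = x 1 := by rw [Zc_apply]; simp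

lemma scalar_final (nr m s t r0 r1 i1 x0 x1 q A B C P : ℝ)
    (hq : q ≠ 0) (hB : A = B * q) (hC : B = C * q)
    (hq2 : x0^2 + x1^2 = q) (hP : P = -nr/2)
    (hcr : nr * (r1 * x0 - i1 * x1) = nr * r0) :
    nr * r1 * (P * B * (2 * x0)) + A * (nr * (m * s - 0 * t)) +
      (r0 * (P * B * 2 + 2 * x0 * (P * ((P - 1) * C * (2 * x0)))) +
       P * B * (2 * x0) * (nr * r1 - 0 * i1)) +
     (nr * -i1 * (P * B * (2 * x1)) + A * (nr * -(m * s - 0 * t)) +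
      (r0 * (P * B * 2 + 2 * x1 * (P * ((P - 1) * C * (2 * x1)))) +
       P * B * (2 * x1) * (0 - (nr * i1 + 0 * r1)))) =
     -(nr ^ 2 / q) * (r0 * A) := by
  have hR : -(nr ^ 2 / q) * (r0 * A) = -(nr^2) * (r0 * B) := by
    rw [hB]; field_simp
  rw [hR]
  linear_combination (4*P*B) * hcr + (4*P*(P-1)*r0*C) * hq2 - (4*P*(P-1)*r0) * hC
    + (r0*B*(4*P + 2*nr)) * hP

lemma hcross (n : ℕ) (x : E2) :
    (n:ℝ) * ((Zc x ^ (n-1)).re * x 0 - (Zc x ^ (n-1)).im * x 1) = (n:ℝ) * (Zc x ^ n).re := by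
  have hc : (n:ℂ) * Zc x ^ (n-1) * Zc x = (n:ℂ) * Zc x ^ n := by
    cases n with
    | zero => simp
    | succ m => rw [Nat.add_sub_cancel, pow_succ]; ring
  have h := congrArg Complex.re hc
  simp only [Complex.mul_re, Complex.mul_im, Complex.natCast_re, Complex.natCast_im,
    Zc_re, Zc_im, zero_mul, mul_zero, sub_zero, add_zero, zero_add] at h
  linear_combination h

lemma lap_wfun (n : ℕ) (x : E2) (hx : x ≠ 0) :
    lap (wfun n) x = -((n:ℝ)^2 / qf x) * wfun n x := by
  have hq := qf_pos hx
  have hev : ∀ᶠ y in nhds x, y ≠ 0 := eventually_ne_nhds hx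
  have he0 : (fun y => fderiv ℝ (wfun n) y (EuclideanSpace.single (0:Fin 2) 1)) =ᶠ[nhds x] G0 n :=
    hev.mono fun y hy => fderiv_wfun_e0 n y hy
  have he1 : (fun y => fderiv ℝ (wfun n) y (EuclideanSpace.single (1:Fin 2) 1)) =ᶠ[nhds x] G1 n :=
    hev.mono fun y hy => fderiv_wfun_e1 n y hy
  rw [lap, Fin.sum_univ_two, he0.fderiv_eq, he1.fderiv_eq,
    (hasFDerivAt_G0 n x hq.ne').fderiv, (hasFDerivAt_G1 n x hq.ne').fderiv,
    wfun_eq' n x hx]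
  simp only [ContinuousLinearMap.add_apply, ContinuousLinearMap.smul_apply,
    ContinuousLinearMap.neg_apply, ContinuousLinearMap.comp_apply, smul_eq_mul,
    DQ_apply, DZ_apply, prj_apply, Zc_e0, Zc_e1, EuclideanSpace.single_apply,
    Complex.reCLM_apply, Complex.imCLM_apply]
  simp only [Fin.isValue, if_true, if_false, mul_one, mul_zero, add_zero, zero_add,
    Complex.mul_re, Complex.mul_im, Complex.natCast_re, Complex.natCast_im,
    Complex.I_re, Complex.I_im, one_ne_zero, zero_ne_one, ite_true, ite_false]
  have hB : qf x ^ pn n = qf x ^ (pn n - 1) * qf x := by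
    rw [Real.rpow_sub_one hq.ne']; field_simp
  have hC : qf x ^ (pn n - 1) = qf x ^ (pn n - 1 - 1) * qf x := by
    rw [Real.rpow_sub_one hq.ne' (pn n - 1)]; field_simp
  exact scalar_final (n:ℝ) (↑(n-1)) (Zc x ^ (n-1-1)).re (Zc x ^ (n-1-1)).im
    (Zc x ^ n).re (Zc x ^ (n-1)).re (Zc x ^ (n-1)).im (x 0) (x 1) (qf x)
    (qf x ^ pn n) (qf x ^ (pn n - 1)) (qf x ^ (pn n - 1 - 1)) (pn n)
    hq.ne' hB hC rfl rfl (hcross n x)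

lemma lap_congr {f g : E2 → ℝ} {s : Set E2} (hs : IsOpen s) {x : E2} (hxs : x ∈ s)
    (h : Set.EqOn f g s) : lap f x = lap g x := by
  have hev : ∀ y ∈ s, f =ᶠ[nhds y] g := fun y hy =>
    (hs.eventually_mem hy).mono (fun z hz => h hz)
  unfold lap
  refine Finset.sum_congr rfl (fun i _ => ?_)
  have hinner : (fun y => fderiv ℝ f y (EuclideanSpace.single i 1)) =ᶠ[nhds x]
      (fun y => fderiv ℝ g y (EuclideanSpace.single i 1)) :=
    (hs.eventually_mem hxs).mono (fun y hy => by
      show fderiv ℝ f y (EuclideanSpace.single i 1) = fderiv ℝ g y (EuclideanSpace.single i 1)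
      rw [(hev y hy).fderiv_eq])
  rw [hinner.fderiv_eq]

lemma cp_apply (R : ℝ) (x : E2) (i : Fin 2) : cpCircle R x i = (R / ‖x‖) * x i := rfl

lemma norm_cp (R : ℝ) (hR : 0 < R) (x : E2) (hx : x ≠ 0) : ‖cpCircle R x‖ = R := by
  have hnx : (0:ℝ) < ‖x‖ := norm_pos_iff.2 hx
  rw [cpCircle, norm_smul, Real.norm_eq_abs, abs_of_pos (div_pos hR hnx),
    div_mul_cancel₀ _ hnx.ne']

lemma wfun_cp (R : ℝ) (hR : 0 < R) (n : ℕ) (x : E2) (hx : x ≠ 0) :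
    wfun n (cpCircle R x) = wfun n x := by
  have hnx : (0:ℝ) < ‖x‖ := norm_pos_iff.2 hx
  have hcpos : 0 < R / ‖x‖ := div_pos hR hnx
  have hz : ((cpCircle R x 0 : ℂ) + (cpCircle R x 1 : ℂ) * Complex.I)
      = ((R / ‖x‖ : ℝ) : ℂ) * ((x 0 : ℂ) + (x 1 : ℂ) * Complex.I) := by
    rw [cp_apply, cp_apply]; push_cast; ring
  have hnorm : ‖cpCircle R x‖ = (R / ‖x‖) * ‖x‖ := by
    rw [cpCircle, norm_smul, Real.norm_eq_abs, abs_of_pos hcpos]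
  rw [wfun, wfun, hz, hnorm, mul_pow, mul_pow, ← Complex.ofReal_pow,
    Complex.re_ofReal_mul, mul_div_mul_left _ _ (pow_ne_zero n hcpos.ne')]

theorem stmt12 (R : ℝ) (hR : 0 < R) (n : ℕ) (lam : ℝ) (hlamdef : lam = (n : ℝ) ^ 2 / R ^ 2)
    (ε : ℝ) (hε : 0 < ε) (hres : lam * ε ^ 2 ≠ 4)
    (v : EuclideanSpace ℝ (Fin 2) → ℝ)
    (hv : ∀ x : EuclideanSpace ℝ (Fin 2), x ≠ 0 →
      v x = (lam * ε ^ 2 * (1 - R ^ 2 / ‖x‖ ^ 2) / (-(lam * ε ^ 2) + 4) + 1) * wfun n x) :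
    (∀ x : EuclideanSpace ℝ (Fin 2), x ≠ 0 → wfun n (cpCircle R x) = wfun n x) ∧
    (∀ x : EuclideanSpace ℝ (Fin 2), ‖x‖ = R → v x = wfun n x) ∧
    (∀ x : EuclideanSpace ℝ (Fin 2), x ≠ 0 →
      -(lap (fun y => v (cpCircle R y)) x - (4 / ε ^ 2) * (v x - v (cpCircle R x)))
        = lam * v x) := by
  have hR' : R ≠ 0 := hR.ne'
  refine ⟨fun x hx => wfun_cp R hR n x hx, ?_, ?_⟩
  · intro x hxR
    have hx : x ≠ 0 := by
      intro h; rw [h, norm_zero] at hxR; exact hR' hxR.symm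
    rw [hv x hx, hxR]
    rw [div_self (pow_ne_zero 2 hR')]
    simp
  · intro x hx
    have hnx : (0:ℝ) < ‖x‖ := norm_pos_iff.2 hx
    have hEq : Set.EqOn (fun y => v (cpCircle R y)) (wfun n) {y : E2 | y ≠ 0} := by
      intro y hy
      have hy' : y ≠ 0 := hy
      have hcy : ‖cpCircle R y‖ = R := norm_cp R hR y hy'
      have hcy0 : cpCircle R y ≠ 0 := by
        intro h; rw [h, norm_zero] at hcy; exact hR' hcy.symm
      show v (cpCircle R y) = wfun n y
      rw [hv _ hcy0, hcy, div_self (pow_ne_zero 2 hR')]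
      simp [wfun_cp R hR n y hy']
    have hop : IsOpen {y : E2 | y ≠ 0} := isOpen_compl_singleton
    have hlap : lap (fun y => v (cpCircle R y)) x = lap (wfun n) x :=
      lap_congr hop hx hEq
    have hvcp : v (cpCircle R x) = wfun n x := hEq hx
    rw [hlap, lap_wfun n x hx, hv x hx, hvcp, qf_eq]
    have hD : -(lam * ε ^ 2) + 4 ≠ 0 := fun h => hres (by linarith)
    have hn2 : (n:ℝ) ^ 2 = lam * R ^ 2 := by rw [hlamdef]; field_simp
    rw [hn2]
    have h2 : ‖x‖ ^ 2 ≠ 0 := pow_ne_zero 2 hnx.ne'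
    field_simp
    ring
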